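/- Let q be a prime power, s, d, n nonnegative integers with n ≤ q, and a_1,...,a_n distinct elements of F_q. The univariate multiplicity code MULT^{(1)}_{q,s}(n,d), which encodes each polynomial P ∈ F_q[X] of degree ≤ d as (P^{(<s)}(a_1), ..., P^{(<s)}(a_n)) ∈ (F_q^s)^n where P^{(<s)}(a) = (P(a), P^{(1)}(a), ..., P^{(s−1)}(a)), has relative distance at least 1 − d/(sn). -/

import Mathlib

open scoped Classical

lemma sum_count_le_card {α : Type*} [DecidableEq α] (t : Finset α) (m : Multiset α) :
    ∑ x ∈ t, m.count x ≤ Multiset.card m := by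
  calc ∑ x ∈ t, m.count x ≤ ∑ x ∈ t ∪ m.toFinset, m.count x :=
        Finset.sum_le_sum_of_subset Finset.subset_union_left
    _ = ∑ x ∈ m.toFinset, m.count x := by
        refine (Finset.sum_subset Finset.subset_union_right ?_).symm
        intro x _ hx
        simpa [Multiset.count_eq_zero] using hx
    _ = Multiset.card m := Multiset.toFinset_sum_count_eq m

theorem stmt_18 {F : Type*} [Field F] [Fintype F] (s d n : ℕ)
    (hs : 0 < s) (hn : 0 < n) (hnq : n ≤ Fintype.card F)
    (a : Fin n → F) (ha : Function.Injective a) :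
    ∀ P ∈ Polynomial.degreeLE F d, ∀ Q ∈ Polynomial.degreeLE F d, P ≠ Q →
      (1 - (d : ℝ) / (s * n)) * n ≤
        ((Finset.univ.filter fun i : Fin n =>
          ∃ j : Fin s, (Polynomial.hasseDeriv (j : ℕ) P).eval (a i)
            ≠ (Polynomial.hasseDeriv (j : ℕ) Q).eval (a i)).card : ℝ) := by
  intro P hP Q hQ hPQ
  set R : Polynomial F := P - Q with hR
  have hR0 : R ≠ 0 := sub_ne_zero.mpr hPQ
  have hRd : R.natDegree ≤ d := by
    have : R.degree ≤ (d : ℕ) := by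
      rw [Polynomial.mem_degreeLE] at hP hQ
      exact le_trans (Polynomial.degree_sub_le P Q) (max_le hP hQ)
    exact Polynomial.natDegree_le_iff_degree_le.mpr this
  set T : Finset (Fin n) := Finset.univ.filter fun i : Fin n =>
      ∀ j : Fin s, (Polynomial.hasseDeriv (j : ℕ) P).eval (a i)
        = (Polynomial.hasseDeriv (j : ℕ) Q).eval (a i) with hT
  -- complement relation
  have hcompl : (Finset.univ.filter fun i : Fin n =>
      ∃ j : Fin s, (Polynomial.hasseDeriv (j : ℕ) P).eval (a i)
        ≠ (Polynomial.hasseDeriv (j : ℕ) Q).eval (a i)) = Tᶜ := by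
    ext i
    simp [hT, not_forall]
  -- each i in T has rootMultiplicity ≥ s
  have hmult : ∀ i ∈ T, s ≤ R.rootMultiplicity (a i) := by
    intro i hi
    rw [hT, Finset.mem_filter] at hi
    rw [Polynomial.le_rootMultiplicity_iff hR0, Polynomial.X_sub_C_pow_dvd_iff,
      Polynomial.X_pow_dvd_iff]
    intro k hk
    have : (Polynomial.taylor (a i) R).coeff k = 0 := by
      rw [Polynomial.taylor_coeff, hR, map_sub, Polynomial.eval_sub, sub_eq_zero]
      exact hi.2 ⟨k, hk⟩
    simpa [Polynomial.taylor_apply] using this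
  -- s * |T| ≤ d
  have hkey : s * T.card ≤ d := by
    calc s * T.card = ∑ i ∈ T, s := by rw [Finset.sum_const, smul_eq_mul, mul_comm]
      _ ≤ ∑ i ∈ T, R.rootMultiplicity (a i) := Finset.sum_le_sum hmult
      _ = ∑ x ∈ T.image a, R.rootMultiplicity x := by
          rw [Finset.sum_image (fun x _ y _ h => ha h)]
      _ = ∑ x ∈ T.image a, R.roots.count x := by
          simp [Polynomial.count_roots]
      _ ≤ Multiset.card R.roots := sum_count_le_card _ _
      _ ≤ R.natDegree := R.card_roots' 
      _ ≤ d := hRd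
  -- translate to reals
  have hcard : Tᶜ.card = n - T.card := by
    rw [Finset.card_compl, Fintype.card_fin]
  rw [hcompl, hcard]
  have hTn : T.card ≤ n := le_trans (Finset.card_le_univ T) (by simp)
  have h1 : (T.card : ℝ) ≤ (d : ℝ) / s := by
    rw [le_div_iff₀ (by positivity)]
    calc (T.card : ℝ) * s = ((s * T.card : ℕ) : ℝ) := by push_cast; ring
      _ ≤ d := by exact_mod_cast hkey
  have h2 : ((n - T.card : ℕ) : ℝ) = (n : ℝ) - T.card := by
    push_cast [hTn]; ring
  rw [h2]
  have hns : (0:ℝ) < s * n := by positivity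
  have : (1 - (d : ℝ) / (s * n)) * n = (n : ℝ) - d / s := by
    field_simp
  rw [this]
  linarith
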